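/- The union of all ω-sorted subwords of ω is itself an ω-sorted subword of ω; in particular it is a reduced word. Consequently, replacing ω by this reduced subword ω′ does not change the collection of ω-sorted words: a subword is ω-sorted iff it is ω′-sorted. -/

import Mathlib

namespace SortingPaper

variable {B : Type*} {M : CoxeterMatrix B} {W : Type*} [Group W]

/-- The subword of `ω` with index set `A` (0-based indices). -/
def subword (ω : List B) (A : Finset ℕ) : List B :=
  (A.sort (· ≤ ·)).filterMap (fun i => ω[i]?)

/-- Lexicographic comparison of index sets: `A ≤lex C` iff `A = C` or the minimum
element of the symmetric difference belongs to `A`. -/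
def lexLE (A C : Finset ℕ) : Prop :=
  A = C ∨ ∃ k, k ∈ A ∧ k ∉ C ∧ ∀ j < k, (j ∈ A ↔ j ∈ C)

/-- `A` is the index set of an ω-sorted word: the corresponding subword is reduced, and
`A` is lexicographically least among index sets of reduced subwords of `ω` with the
same product in `W`. -/
def IsSorted (cs : CoxeterSystem M W) (ω : List B) (A : Finset ℕ) : Prop :=
  A ⊆ Finset.range ω.length ∧ cs.IsReduced (subword ω A) ∧
  ∀ C ⊆ Finset.range ω.length, cs.IsReduced (subword ω C) →
    cs.wordProd (subword ω C) = cs.wordProd (subword ω A) → lexLE A C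

/-- The ω-sorting algorithm (auxiliary): scan the word, recording positions that are
left descents of the current element. -/
noncomputable def sortAux (cs : CoxeterSystem M W) : List B → ℕ → W → Finset ℕ
  | [], _, _ => ∅
  | s :: rest, i, x =>
    if cs.length (cs.simple s * x) < cs.length x then
      insert i (sortAux cs rest (i + 1) (cs.simple s * x))
    else sortAux cs rest (i + 1) x

/-- The index set produced by the ω-sorting algorithm applied to `u ∈ W`. -/
noncomputable def sortIdx (cs : CoxeterSystem M W) (ω : List B) (u : W) : Finset ℕ :=
  sortAux cs ω 0 u



/-! ### Part 1: the strong exchange property (not in Mathlib) -/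

open List CoxeterSystem

lemma zmod2_cases (x : ZMod 2) : x = 0 ∨ x = 1 := by
  fin_cases x
  · exact Or.inl rfl
  · exact Or.inr rfl

section StrongExchange

open scoped Classical

variable (cs : CoxeterSystem M W)

local prefix:100 "σ" => cs.simple
local prefix:100 "π" => cs.wordProd
local prefix:100 "ℓ" => cs.length

/-- The sign-tracking endomorphism associated to a simple generator. -/
noncomputable def eta (i : B) : Function.End (W × ZMod 2) :=
  fun p => (σ i * p.1 * σ i, p.2 + if p.1 = σ i then 1 else 0)

/-- Product of the `eta`s along a word. -/
noncomputable def etaWord (ω : List B) : Function.End (W × ZMod 2) :=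
  (ω.map (eta cs)).prod

lemma etaWord_nil : etaWord cs [] = 1 := by simp [etaWord]

lemma etaWord_cons (i : B) (ω : List B) :
    etaWord cs (i :: ω) = eta cs i * etaWord cs ω := by
  simp [etaWord]

lemma etaWord_apply (ω : List B) (p : W × ZMod 2) :
    etaWord cs ω p = (π ω * p.1 * (π ω)⁻¹,
      p.2 + ((cs.rightInvSeq ω).count p.1 : ZMod 2)) := by
  induction ω with
  | nil =>
      rw [etaWord_nil cs, Function.End.one_def]
      simp
  | cons i ω ih =>
      rw [etaWord_cons cs]
      show eta cs i (etaWord cs ω p) = _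
      rw [ih]
      have hris : cs.rightInvSeq (i :: ω) = ((π ω)⁻¹ * σ i * π ω) :: cs.rightInvSeq ω := rfl
      rw [hris]
      have hiff : ((π ω)⁻¹ * σ i * π ω = p.1) ↔ (π ω * p.1 * (π ω)⁻¹ = σ i) := by
        constructor
        · intro h; rw [← h]; group
        · intro h; rw [← h]; group
      have hcount : ((((π ω)⁻¹ * σ i * π ω) :: cs.rightInvSeq ω).count p.1 : ZMod 2)
          = ((cs.rightInvSeq ω).count p.1 : ZMod 2)
            + if π ω * p.1 * (π ω)⁻¹ = σ i then 1 else 0 := by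
        rw [List.count_cons]
        simp only [beq_iff_eq, hiff]
        by_cases h : π ω * p.1 * (π ω)⁻¹ = σ i
        · rw [if_pos h, if_pos h]; push_cast; ring
        · rw [if_neg h, if_neg h]; push_cast; ring
      show (σ i * (π ω * p.1 * (π ω)⁻¹) * σ i, _) = _
      refine Prod.ext ?_ ?_
      · show σ i * (π ω * p.1 * (π ω)⁻¹) * σ i = π (i :: ω) * p.1 * (π (i :: ω))⁻¹
        rw [cs.wordProd_cons, mul_inv_rev, cs.inv_simple]
        group
      · show p.2 + _ + (if π ω * p.1 * (π ω)⁻¹ = σ i then 1 else 0) = p.2 + _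
        rw [hcount]
        ring

lemma etaWord_alt_even (i i' : B) (m : ℕ) :
    etaWord cs (alternatingWord i i' (2 * m)) = (eta cs i * eta cs i') ^ m := by
  induction m with
  | zero =>
      rw [pow_zero, Nat.mul_zero]
      exact etaWord_nil cs
  | succ m ih =>
      have h2 : 2 * (m + 1) = (2 * m + 1) + 1 := by ring
      rw [h2, alternatingWord_succ', alternatingWord_succ']
      have he : ¬ Even (2 * m + 1) := by rintro ⟨k, hk⟩; omega
      have he2 : Even (2 * m) := ⟨m, by omega⟩
      rw [if_neg he, if_pos he2, etaWord_cons cs, etaWord_cons cs, ih, pow_succ']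
      rw [mul_assoc]

lemma alt_drop (i i' : B) : ∀ (m p : ℕ),
    (alternatingWord i i' m).drop p = alternatingWord i i' (m - p) := by
  intro m
  induction m with
  | zero => intro p; simp [alternatingWord]
  | succ m ih =>
      intro p
      cases p with
      | zero => simp
      | succ p =>
          rw [alternatingWord_succ']
          simp only [List.drop_succ_cons]
          rw [ih p]
          congr 1
          omega

lemma alt_head (i i' : B) (r : ℕ) :
    (alternatingWord i i' (r + 1))[0]? = some (if Even r then i' else i) := by
  rw [alternatingWord_succ']
  rfl

/-- Key commutation identity; uses no braid relations. -/
lemma alt_conj (cs : CoxeterSystem M W) (i i' : B) : ∀ r : ℕ,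
    cs.wordProd (alternatingWord i i' r) * (cs.simple i' * cs.simple i)
      = (if Even r then cs.simple i' * cs.simple i else cs.simple i * cs.simple i')
          * cs.wordProd (alternatingWord i i' r) := by
  intro r
  induction r with
  | zero => simp [alternatingWord]
  | succ r ih =>
      rw [alternatingWord_succ', cs.wordProd_cons]
      by_cases h : Even r
      · rw [if_pos h] at ih
        have h1 : ¬ Even (r + 1) := by rw [Nat.even_add_one]; exact not_not_intro h
        rw [if_pos h, if_neg h1, mul_assoc, ih]
        simp [mul_assoc, cs.simple_mul_simple_cancel_left]
      · rw [if_neg h] at ih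
        have h1 : Even (r + 1) := by rw [Nat.even_add_one]; exact h
        rw [if_neg h, if_pos h1, mul_assoc, ih]
        simp [mul_assoc, cs.simple_mul_simple_cancel_left]

lemma alt_conj_getD (cs : CoxeterSystem M W) (i i' : B) : ∀ r : ℕ,
    (cs.wordProd (alternatingWord i i' r))⁻¹ * cs.simple (if Even r then i' else i)
        * cs.wordProd (alternatingWord i i' r)
      = (cs.simple i' * cs.simple i) ^ r * cs.simple i' := by
  intro r
  induction r with
  | zero => simp [alternatingWord]
  | succ r ih =>
      rw [alternatingWord_succ', cs.wordProd_cons, mul_inv_rev, cs.inv_simple]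
      have hQ : cs.simple (if Even r then i' else i) * cs.simple (if Even (r + 1) then i' else i)
          = (if Even r then cs.simple i' * cs.simple i else cs.simple i * cs.simple i') := by
        by_cases h : Even r
        · have h1 : ¬ Even (r + 1) := by rw [Nat.even_add_one]; exact not_not_intro h
          rw [if_pos h, if_neg h1, if_pos h]
        · have h1 : Even (r + 1) := by rw [Nat.even_add_one]; exact h
          rw [if_neg h, if_pos h1, if_neg h]
      have hkey : (cs.wordProd (alternatingWord i i' r))⁻¹
            * (if Even r then cs.simple i' * cs.simple i else cs.simple i * cs.simple i')
          = (cs.simple i' * cs.simple i) * (cs.wordProd (alternatingWord i i' r))⁻¹ := by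
        have h2 : (if Even r then cs.simple i' * cs.simple i else cs.simple i * cs.simple i')
            = cs.wordProd (alternatingWord i i' r) * (cs.simple i' * cs.simple i)
                * (cs.wordProd (alternatingWord i i' r))⁻¹ := by
          rw [alt_conj cs i i' r]; group
        rw [h2]; group
      calc (cs.wordProd (alternatingWord i i' r))⁻¹ * cs.simple (if Even r then i' else i)
            * cs.simple (if Even (r + 1) then i' else i)
            * (cs.simple (if Even r then i' else i) * cs.wordProd (alternatingWord i i' r))
          = (cs.wordProd (alternatingWord i i' r))⁻¹
              * (cs.simple (if Even r then i' else i)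
                  * cs.simple (if Even (r + 1) then i' else i))
              * cs.simple (if Even r then i' else i)
              * cs.wordProd (alternatingWord i i' r) := by group
        _ = (cs.wordProd (alternatingWord i i' r))⁻¹
              * (if Even r then cs.simple i' * cs.simple i else cs.simple i * cs.simple i')
              * cs.simple (if Even r then i' else i)
              * cs.wordProd (alternatingWord i i' r) := by rw [hQ]
        _ = (cs.simple i' * cs.simple i) * ((cs.wordProd (alternatingWord i i' r))⁻¹
              * cs.simple (if Even r then i' else i)
              * cs.wordProd (alternatingWord i i' r)) := by
              rw [← mul_assoc, hkey]; group
        _ = (cs.simple i' * cs.simple i) * ((cs.simple i' * cs.simple i) ^ r * cs.simple i') := by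
              rw [ih]
        _ = (cs.simple i' * cs.simple i) ^ (r + 1) * cs.simple i' := by
              rw [← mul_assoc, ← pow_succ']

lemma getD_ris_alt (cs : CoxeterSystem M W) (i i' : B) (m j : ℕ) (hj : j < m) :
    (cs.rightInvSeq (alternatingWord i i' m)).getD j 1
      = (cs.simple i' * cs.simple i) ^ (m - 1 - j) * cs.simple i' := by
  rw [cs.getD_rightInvSeq, alt_drop i i']
  have hdrop : ((alternatingWord i i' m).drop j)[0]? = (alternatingWord i i' m)[j]? := by
    rw [List.getElem?_drop]
    norm_num
  have hg : (alternatingWord i i' m)[j]? = some (if Even (m - j - 1) then i' else i) := by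
    rw [← hdrop, alt_drop i i']
    have hmj : m - j = (m - j - 1) + 1 := by omega
    rw [hmj, alt_head]
    norm_num
  rw [hg]
  simp only [Option.map_some, Option.getD_some]
  have h1 : m - (j + 1) = m - j - 1 := by omega
  have h2 : m - 1 - j = m - j - 1 := by omega
  rw [h1, h2]
  exact alt_conj_getD cs i i' (m - j - 1)

lemma eta_liftable : M.IsLiftable (eta cs) := by
  intro i i'
  have hpow : (eta cs i * eta cs i') ^ M i i'
      = etaWord cs (alternatingWord i i' (2 * M i i')) := (etaWord_alt_even cs i i' _).symm
  rw [hpow]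
  funext p
  rw [etaWord_apply]
  have hprod : π (alternatingWord i i' (2 * M i i')) = 1 := by
    rw [cs.prod_alternatingWord_eq_mul_pow]
    have hev : Even (2 * M i i') := ⟨M i i', by omega⟩
    rw [if_pos hev]
    have h2 : 2 * M i i' / 2 = M i i' := by omega
    rw [h2, one_mul, cs.simple_mul_simple_pow]
  have hcount : Even ((cs.rightInvSeq (alternatingWord i i' (2 * M i i'))).count p.1) := by
    set ω := alternatingWord i i' (2 * M i i') with hω
    set L := cs.rightInvSeq ω with hL
    have hlen : L.length = 2 * M i i' := by
      rw [hL, cs.length_rightInvSeq, hω, length_alternatingWord]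
    have heq : L.drop (M i i') = L.take (M i i') := by
      apply List.ext_getElem
      · rw [List.length_drop, List.length_take]; omega
      · intro n h1 h2
        have hn : n < M i i' := by
          rw [List.length_take] at h2; omega
        have g1 : (L.drop (M i i'))[n]'h1 = L.getD (M i i' + n) 1 := by
          rw [List.getElem_drop]
          exact (List.getD_eq_getElem _ _ (by omega)).symm
        have g2 : (L.take (M i i'))[n]'h2 = L.getD n 1 := by
          rw [List.getElem_take]
          exact (List.getD_eq_getElem _ _ (by omega)).symm
        rw [g1, g2, hL, hω,
          getD_ris_alt cs i i' _ _ (by omega), getD_ris_alt cs i i' _ _ (by omega)]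
        have harith : 2 * M i i' - 1 - n = (2 * M i i' - 1 - (M i i' + n)) + M i i' := by omega
        rw [harith, pow_add, cs.simple_mul_simple_pow' i i', mul_one]
    have hsplit : L = L.take (M i i') ++ L.drop (M i i') := (List.take_append_drop _ _).symm
    rw [hsplit, List.count_append, heq]
    exact ⟨_, rfl⟩
  obtain ⟨c, hc⟩ := hcount
  rw [hprod, hc]
  have hz : ((c + c : ℕ) : ZMod 2) = 0 := by
    push_cast
    exact CharTwo.add_self_eq_zero _
  rw [hz, add_zero]
  show (1 * p.1 * 1⁻¹, p.2) = p
  simp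

/-- The parity homomorphism. -/
noncomputable def phi : W →* Function.End (W × ZMod 2) :=
  cs.lift ⟨eta cs, eta_liftable cs⟩

/-- The reflection-counting cocycle. -/
noncomputable def nn (v w : W) : ZMod 2 := (phi cs v (w, 0)).2

lemma phi_wordProd (ω : List B) : phi cs (π ω) = etaWord cs ω := by
  induction ω with
  | nil => rw [cs.wordProd_nil, map_one, etaWord_nil]
  | cons i ω ih =>
      rw [cs.wordProd_cons, map_mul, etaWord_cons, ih]
      congr 1
      exact cs.lift_apply_simple (eta_liftable cs) i

lemma nn_wordProd (ω : List B) (t : W) :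
    nn cs (π ω) t = ((cs.rightInvSeq ω).count t : ZMod 2) := by
  rw [nn, phi_wordProd, etaWord_apply]
  simp

lemma phi_apply (v : W) (p : W × ZMod 2) :
    phi cs v p = (v * p.1 * v⁻¹, p.2 + nn cs v p.1) := by
  obtain ⟨ω, rfl⟩ := cs.wordProd_surjective v
  rw [phi_wordProd, etaWord_apply, nn_wordProd]

lemma nn_mul (u v t : W) : nn cs (u * v) t = nn cs u (v * t * v⁻¹) + nn cs v t := by
  have h : phi cs (u * v) (t, 0) = phi cs u (phi cs v (t, 0)) := by rw [map_mul]; rfl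
  rw [nn, h, phi_apply cs v (t, 0), phi_apply cs u (v * t * v⁻¹, (0 : ZMod 2) + nn cs v t)]
  show ((0 : ZMod 2) + nn cs v t) + nn cs u (v * t * v⁻¹) = _
  ring

lemma nn_one (t : W) : nn cs 1 t = 0 := by
  rw [nn, map_one]
  rfl

lemma nn_inv (w t : W) : nn cs w⁻¹ t = nn cs w (w⁻¹ * t * w) := by
  have h := nn_mul cs w w⁻¹ t
  rw [mul_inv_cancel, nn_one] at h
  have h2 : w⁻¹ * t * w⁻¹⁻¹ = w⁻¹ * t * w := by group
  rw [h2] at h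
  have h3 := eq_neg_of_add_eq_zero_right h.symm
  rw [h3, CharTwo.neg_eq]

lemma nn_simple_self (i : B) : nn cs (σ i) (σ i) = 1 := by
  have h := nn_wordProd cs [i] (σ i)
  rw [cs.wordProd_singleton] at h
  rw [h, cs.rightInvSeq_singleton]
  simp

lemma nn_refl {t : W} (ht : cs.IsReflection t) : nn cs t t = 1 := by
  obtain ⟨w, i, rfl⟩ := ht
  have e1 : w * σ i * w⁻¹ = w * (σ i * w⁻¹) := by group
  rw [e1, nn_mul cs w (σ i * w⁻¹) (w * (σ i * w⁻¹))]
  have e2 : σ i * w⁻¹ * (w * (σ i * w⁻¹)) * (σ i * w⁻¹)⁻¹ = σ i := by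
    rw [mul_inv_rev, inv_inv, cs.inv_simple]
    simp [mul_assoc, cs.simple_mul_simple_cancel_left]
  have e3 : nn cs (σ i * w⁻¹) (w * (σ i * w⁻¹))
      = nn cs (σ i) (σ i) + nn cs w⁻¹ (w * (σ i * w⁻¹)) := by
    rw [nn_mul cs (σ i) w⁻¹ (w * (σ i * w⁻¹))]
    congr 2
    simp [mul_assoc]
  have e4 : nn cs w⁻¹ (w * (σ i * w⁻¹)) = nn cs w (σ i) := by
    rw [nn_inv cs w (w * (σ i * w⁻¹))]
    congr 1
    simp [mul_assoc]
  rw [e2, e3, e4, nn_simple_self cs i]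
  have hz : ∀ x : ZMod 2, x + (1 + x) = 1 := by decide
  exact hz _

lemma length_mul_lt_of_nn_one {v t : W} (h : nn cs v t = 1) :
    ℓ (v * t) < ℓ v := by
  obtain ⟨ω, hred, rfl⟩ := cs.exists_reduced_word' v
  rw [nn_wordProd] at h
  have hmem : t ∈ cs.rightInvSeq ω := by
    by_contra hmem
    rw [List.count_eq_zero_of_not_mem hmem] at h
    simp at h
  exact (cs.isRightInversion_of_mem_rightInvSeq hred hmem).2

lemma nn_eq_one_of_isRightInversion {v t : W} (ht : cs.IsReflection t)
    (h : ℓ (v * t) < ℓ v) : nn cs v t = 1 := by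
  rcases zmod2_cases (nn cs v t) with h0 | h1
  · exfalso
    have hvt : nn cs (v * t) t = 1 := by
      rw [nn_mul cs v t t]
      have e : t * t * t⁻¹ = t := by rw [ht.mul_self, one_mul, ht.inv]
      rw [e, h0, nn_refl cs ht, zero_add]
    have hlt := length_mul_lt_of_nn_one cs hvt
    rw [mul_assoc, ht.mul_self, mul_one] at hlt
    omega
  · exact h1

lemma mem_leftInvSeq_of_isLeftInversion {l : List B} (hl : cs.IsReduced l) {t : W}
    (ht : cs.IsReflection t) (h : ℓ (t * π l) < ℓ (π l)) : t ∈ cs.leftInvSeq l := by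
  have hv : π l.reverse = (π l)⁻¹ := cs.wordProd_reverse l
  have hlen : ℓ ((π l)⁻¹ * t) < ℓ ((π l)⁻¹) := by
    have e1 : ℓ ((π l)⁻¹ * t) = ℓ (t * π l) := by
      rw [← cs.length_inv, mul_inv_rev, ht.inv, inv_inv]
    rw [e1, cs.length_inv]
    exact h
  have hnn : nn cs ((π l)⁻¹) t = 1 :=
    nn_eq_one_of_isRightInversion cs ht hlen
  rw [← hv, nn_wordProd] at hnn
  have hmem : t ∈ cs.rightInvSeq l.reverse := by
    by_contra hmem
    rw [List.count_eq_zero_of_not_mem hmem] at hnn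
    simp at hnn
  rw [cs.rightInvSeq_reverse] at hmem
  exact (List.mem_reverse).mp hmem

/-- Strong exchange, eraseIdx form. -/
lemma strong_exchange {l : List B} (hl : cs.IsReduced l) {t : W}
    (ht : cs.IsReflection t) (h : ℓ (t * π l) < ℓ (π l)) :
    ∃ j < l.length, π (l.eraseIdx j) = t * π l := by
  have hmem := mem_leftInvSeq_of_isLeftInversion cs hl ht h
  obtain ⟨j, hj, hget⟩ := List.mem_iff_getElem.mp hmem
  rw [cs.length_leftInvSeq] at hj
  refine ⟨j, hj, ?_⟩
  have hgetD : (cs.leftInvSeq l).getD j 1 = t := by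
    rw [List.getD_eq_getElem _ _ (by rw [cs.length_leftInvSeq]; exact hj)]
    exact hget
  rw [← cs.getD_leftInvSeq_mul_wordProd, hgetD]

/-- Simple-reflection exchange: produces a reduced sublist. -/
lemma simple_exchange {l : List B} (hl : cs.IsReduced l) {i : B}
    (h : ℓ (σ i * π l) < ℓ (π l)) :
    ∃ l', l' <+ l ∧ cs.IsReduced l' ∧ π l' = σ i * π l := by
  obtain ⟨j, hj, hprod⟩ := strong_exchange cs hl (cs.isReflection_simple i) h
  refine ⟨l.eraseIdx j, List.eraseIdx_sublist l j, ?_, hprod⟩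
  have hlen : (l.eraseIdx j).length + 1 = l.length := List.length_eraseIdx_add_one hj
  have hdisj := cs.length_simple_mul (π l) i
  have hl' : ℓ (π l) = l.length := hl
  show ℓ (π (l.eraseIdx j)) = (l.eraseIdx j).length
  rw [hprod]
  omega

/-- "Lemma D": a lifting property for lengths; needs strong exchange. -/
lemma length_lemmaD {x u : W} {i : B} (hxs : ℓ (x * σ i) = ℓ x + 1)
    (hsu : ℓ (σ i * u) = ℓ u + 1) (hxu : ℓ (x * u) = ℓ x + ℓ u) :
    ℓ (x * σ i * u) = ℓ x + ℓ u + 1 := by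
  have hle : ℓ (x * σ i * u) ≤ ℓ x + ℓ u + 1 := by
    have := cs.length_mul_le (x * σ i) u
    omega
  have hpar : ℓ (x * σ i * u) % 2 = (ℓ x + ℓ u + 1) % 2 := by
    have h1 := cs.length_mul_mod_two (x * σ i) u
    have h2 := cs.length_mul_mod_two x (σ i)
    rw [cs.length_simple] at h2
    omega
  rcases Nat.lt_or_ge (ℓ (x * σ i * u)) (ℓ x + ℓ u + 1) with hlt | hge
  · exfalso
    have hlt2 : ℓ (x * σ i * u) < ℓ x + ℓ u := by omega
    obtain ⟨lx, hlxr, hlxe⟩ := cs.exists_reduced_word' x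
    obtain ⟨lu, hlur, hlue⟩ := cs.exists_reduced_word' u
    have a1 : ℓ x = lx.length := by rw [hlxe]; exact hlxr
    have a2 : ℓ u = lu.length := by rw [hlue]; exact hlur
    have hprodl : π (lx ++ lu) = x * u := by rw [cs.wordProd_append, ← hlxe, ← hlue]
    have hredl : cs.IsReduced (lx ++ lu) := by
      show ℓ (π (lx ++ lu)) = (lx ++ lu).length
      rw [hprodl, List.length_append]
      omega
    have ht : cs.IsReflection (x * σ i * x⁻¹) := ⟨x, i, rfl⟩
    have htprod : (x * σ i * x⁻¹) * π (lx ++ lu) = x * σ i * u := by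
      rw [hprodl]; group
    have hdesc : ℓ ((x * σ i * x⁻¹) * π (lx ++ lu)) < ℓ (π (lx ++ lu)) := by
      rw [htprod, hprodl, hxu]
      omega
    obtain ⟨j, hj, hprodj⟩ := strong_exchange cs hredl ht hdesc
    rw [htprod] at hprodj
    rcases Nat.lt_or_ge j lx.length with hjx | hjx
    · rw [List.eraseIdx_append_of_lt_length hjx] at hprodj
      rw [cs.wordProd_append, ← hlue] at hprodj
      have hxsi : π (lx.eraseIdx j) = x * σ i := mul_right_cancel hprodj
      have hb := cs.length_wordProd_le (lx.eraseIdx j)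
      rw [hxsi] at hb
      have hlenx : (lx.eraseIdx j).length + 1 = lx.length := List.length_eraseIdx_add_one hjx
      omega
    · rw [List.eraseIdx_append_of_length_le hjx] at hprodj
      rw [cs.wordProd_append, ← hlxe, mul_assoc] at hprodj
      have hsiu : π (lu.eraseIdx (j - lx.length)) = σ i * u := mul_left_cancel hprodj
      have hb := cs.length_wordProd_le (lu.eraseIdx (j - lx.length))
      rw [hsiu, hsu] at hb
      have hlenu : (lu.eraseIdx (j - lx.length)).length ≤ lu.length :=
        List.length_eraseIdx_le _ _
      omega
  · omega

end StrongExchange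

/-! ### Part 2: subword and lexicographic machinery -/

section SubwordLex

/-- Shift a finite index set up by one. -/
def up1 (A : Finset ℕ) : Finset ℕ := A.image (· + 1)

/-- Shift a finite index set down by one (dropping `0`). -/
def down1 (A : Finset ℕ) : Finset ℕ := (A.erase 0).image (· - 1)

lemma mem_up1 {A : Finset ℕ} {n : ℕ} : n ∈ up1 A ↔ ∃ a ∈ A, a + 1 = n := by
  simp [up1]

lemma zero_not_mem_up1 (A : Finset ℕ) : 0 ∉ up1 A := by
  simp [up1]

lemma mem_up1_down1 {A : Finset ℕ} {n : ℕ} : n ∈ up1 (down1 A) ↔ n ∈ A ∧ n ≠ 0 := by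
  simp only [up1, down1, Finset.mem_image, Finset.mem_erase]
  constructor
  · rintro ⟨a, ⟨b, ⟨hb0, hbA⟩, hba⟩, han⟩
    have : n = b := by omega
    subst this
    exact ⟨hbA, by omega⟩
  · rintro ⟨hnA, hn0⟩
    exact ⟨n - 1, ⟨n, ⟨hn0, hnA⟩, rfl⟩, by omega⟩

lemma finset_decomp_pos {A : Finset ℕ} (h : 0 ∈ A) : A = insert 0 (up1 (down1 A)) := by
  ext n
  rw [Finset.mem_insert, mem_up1_down1]
  constructor
  · intro hn
    by_cases hn0 : n = 0
    · exact Or.inl hn0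
    · exact Or.inr ⟨hn, hn0⟩
  · rintro (rfl | ⟨hn, _⟩)
    · exact h
    · exact hn

lemma finset_decomp_neg {A : Finset ℕ} (h : 0 ∉ A) : A = up1 (down1 A) := by
  ext n
  rw [mem_up1_down1]
  constructor
  · intro hn
    refine ⟨hn, ?_⟩
    rintro rfl
    exact h hn
  · exact fun hn => hn.1

lemma card_up1 (A : Finset ℕ) : (up1 A).card = A.card :=
  Finset.card_image_of_injOn (fun a _ b _ hab => by omega)

lemma card_down1 (A : Finset ℕ) : (down1 A).card = (A.erase 0).card :=
  Finset.card_image_of_injOn (fun a ha b hb hab => by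
    have ha' : a ∈ A ∧ ¬ a = 0 := by simpa using ha
    have hb' : b ∈ A ∧ ¬ b = 0 := by simpa using hb
    have := ha'.2
    have := hb'.2
    omega)

lemma up1_subset_range {A : Finset ℕ} {n : ℕ} (h : A ⊆ Finset.range n) :
    up1 A ⊆ Finset.range (n + 1) := by
  intro x hx
  rw [mem_up1] at hx
  obtain ⟨a, ha, rfl⟩ := hx
  have := h ha
  rw [Finset.mem_range] at *
  omega

lemma down1_subset_range {A : Finset ℕ} {n : ℕ} (h : A ⊆ Finset.range (n + 1)) :
    down1 A ⊆ Finset.range n := by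
  intro x hx
  simp only [down1, Finset.mem_image, Finset.mem_erase] at hx
  obtain ⟨b, ⟨hb0, hbA⟩, rfl⟩ := hx
  have := h hbA
  rw [Finset.mem_range] at *
  omega

/-- Sorting an image under a map that is strictly monotone on the set. -/
lemma sort_image (A : Finset ℕ) (f : ℕ → ℕ)
    (hf : ∀ a ∈ A, ∀ b ∈ A, a < b → f a < f b) :
    (A.image f).sort (· ≤ ·) = (A.sort (· ≤ ·)).map f := by
  have hinj : ∀ a ∈ A.val, ∀ b ∈ A.val, f a = f b → a = b := by
    intro a ha b hb hab
    by_contra hne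
    rcases Nat.lt_or_ge a b with h | h
    · exact absurd hab (Nat.ne_of_lt (hf a ha b hb h))
    · have h' : b < a := by omega
      exact absurd hab.symm (Nat.ne_of_lt (hf b hb a ha h'))
  refine List.Perm.eq_of_pairwise' (r := (· ≤ ·)) ?_ ?_ ?_
  · exact Finset.pairwise_sort _ _
  · rw [List.pairwise_map]
    have hp := (Finset.sortedLT_sort A).pairwise
    refine List.Pairwise.imp_of_mem ?_ hp
    intro a b ha hb hab
    exact le_of_lt (hf a ((Finset.mem_sort _).mp ha) b ((Finset.mem_sort _).mp hb) hab)
  · rw [← Multiset.coe_eq_coe, Finset.sort_eq]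
    have h1 : ((A.sort (· ≤ ·)).map f : Multiset ℕ) = A.val.map f := by
      rw [← Multiset.map_coe, Finset.sort_eq]
    rw [h1, Finset.image_val, Multiset.dedup_eq_self.mpr (Multiset.Nodup.map_on hinj A.nodup)]

lemma sort_up1 (A : Finset ℕ) :
    (up1 A).sort (· ≤ ·) = (A.sort (· ≤ ·)).map (· + 1) :=
  sort_image A _ (fun a _ b _ h => by omega)

lemma sort_insert_zero (A : Finset ℕ) :
    (insert 0 (up1 A)).sort (· ≤ ·) = 0 :: (up1 A).sort (· ≤ ·) :=
  Finset.sort_insert _ (fun b _ => Nat.zero_le b) (zero_not_mem_up1 A)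

lemma subword_nil (A : Finset ℕ) : subword ([] : List B) A = [] := by
  simp [subword]

lemma subword_empty (ω : List B) : subword ω (∅ : Finset ℕ) = [] := by
  simp [subword]

lemma subword_up1 (c : B) (ω : List B) (A : Finset ℕ) :
    subword (c :: ω) (up1 A) = subword ω A := by
  rw [subword, subword, sort_up1, List.filterMap_map]
  rfl

lemma subword_insert_up1 (c : B) (ω : List B) (A : Finset ℕ) :
    subword (c :: ω) (insert 0 (up1 A)) = c :: subword ω A := by
  rw [subword, sort_insert_zero, List.filterMap_cons]
  show c :: _ = _
  rw [← subword_up1 c ω A, subword]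

lemma length_subword : ∀ (ω : List B) (A : Finset ℕ), A ⊆ Finset.range ω.length →
    (subword ω A).length = A.card := by
  intro ω
  induction ω with
  | nil =>
      intro A hA
      have : A = ∅ := by
        rw [← Finset.subset_empty]
        simpa using hA
      rw [this, subword_empty]
      simp
  | cons c ω ih =>
      intro A hA
      have hA' : down1 A ⊆ Finset.range ω.length := by
        apply down1_subset_range
        simpa using hA
      by_cases h0 : 0 ∈ A
      · rw [finset_decomp_pos h0, subword_insert_up1]
        have hcard : (insert 0 (up1 (down1 A))).card = (down1 A).card + 1 := by
          rw [Finset.card_insert_of_notMem (zero_not_mem_up1 _), card_up1]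
        rw [hcard]
        simp [ih _ hA']
      · rw [finset_decomp_neg h0, subword_up1]
        rw [card_up1, ih _ hA']

lemma subword_sublist : ∀ (ω : List B) (A : Finset ℕ), subword ω A <+ ω := by
  intro ω
  induction ω with
  | nil => intro A; rw [subword_nil]
  | cons c ω ih =>
      intro A
      by_cases h0 : 0 ∈ A
      · rw [finset_decomp_pos h0, subword_insert_up1]
        exact List.Sublist.cons₂ c (ih (down1 A))
      · rw [finset_decomp_neg h0, subword_up1]
        exact List.Sublist.cons c (ih (down1 A))

lemma exists_subword_eq_of_sublist {ω l : List B} (h : l <+ ω) :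
    ∃ A, A ⊆ Finset.range ω.length ∧ subword ω A = l := by
  induction h with
  | slnil => exact ⟨∅, by simp, subword_empty _⟩
  | cons c h ih =>
      obtain ⟨A, hA, hs⟩ := ih
      refine ⟨up1 A, ?_, ?_⟩
      · simpa using up1_subset_range hA
      · rw [subword_up1, hs]
  | cons_cons c h ih =>
      obtain ⟨A, hA, hs⟩ := ih
      refine ⟨insert 0 (up1 A), ?_, ?_⟩
      · intro x hx
        rcases Finset.mem_insert.mp hx with rfl | hx
        · simp
        · have := up1_subset_range hA hx
          simpa using this
      · rw [subword_insert_up1, hs]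

/-! lexLE lemmas -/

lemma lexLE_refl (A : Finset ℕ) : lexLE A A := Or.inl rfl

lemma lexLE_of_zero_mem {A C : Finset ℕ} (h0 : 0 ∈ A) (h0C : 0 ∉ C) : lexLE A C :=
  Or.inr ⟨0, h0, h0C, fun j hj => absurd hj (Nat.not_lt_zero j)⟩

lemma lexLE_trans {A C D : Finset ℕ} (h1 : lexLE A C) (h2 : lexLE C D) : lexLE A D := by
  rcases h1 with rfl | ⟨k1, hk1A, hk1C, hag1⟩
  · exact h2
  rcases h2 with rfl | ⟨k2, hk2C, hk2D, hag2⟩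
  · exact Or.inr ⟨k1, hk1A, hk1C, hag1⟩
  rcases Nat.lt_trichotomy k1 k2 with h | rfl | h
  · refine Or.inr ⟨k1, hk1A, ?_, ?_⟩
    · intro hk1D
      exact hk1C ((hag2 k1 h).mpr hk1D)
    · intro j hj
      exact (hag1 j hj).trans (hag2 j (hj.trans h))
  · refine Or.inr ⟨k1, hk1A, hk2D, ?_⟩
    intro j hj
    exact (hag1 j hj).trans (hag2 j hj)
  · refine Or.inr ⟨k2, ?_, hk2D, ?_⟩
    · exact (hag1 k2 h).mpr hk2C
    · intro j hj
      exact (hag1 j (hj.trans h)).trans (hag2 j hj)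

lemma lexLE_antisymm {A C : Finset ℕ} (h1 : lexLE A C) (h2 : lexLE C A) : A = C := by
  rcases h1 with rfl | ⟨k1, hk1A, hk1C, hag1⟩
  · rfl
  rcases h2 with rfl | ⟨k2, hk2C, hk2A, hag2⟩
  · rfl
  exfalso
  rcases Nat.lt_trichotomy k1 k2 with h | rfl | h
  · exact hk1C ((hag2 k1 h).mpr hk1A)
  · exact hk2A hk1A
  · exact hk2A ((hag1 k2 h).mpr hk2C)

lemma lexLE_insert_zero {A C : Finset ℕ} (hA : 0 ∉ A) (hC : 0 ∉ C) (h : lexLE A C) :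
    lexLE (insert 0 A) (insert 0 C) := by
  rcases h with rfl | ⟨k, hkA, hkC, hag⟩
  · exact lexLE_refl _
  refine Or.inr ⟨k, Finset.mem_insert_of_mem hkA, ?_, ?_⟩
  · intro hk
    rcases Finset.mem_insert.mp hk with rfl | hk
    · exact hA hkA
    · exact hkC hk
  · intro j hj
    rcases Nat.eq_zero_or_pos j with rfl | hjpos
    · simp
    · rw [Finset.mem_insert, Finset.mem_insert]
      constructor
      · rintro (rfl | hjA)
        · omega
        · exact Or.inr ((hag j hj).mp hjA)
      · rintro (rfl | hjC)
        · omega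
        · exact Or.inr ((hag j hj).mpr hjC)

lemma lexLE_up1 {A C : Finset ℕ} (h : lexLE A C) : lexLE (up1 A) (up1 C) := by
  rcases h with rfl | ⟨k, hkA, hkC, hag⟩
  · exact lexLE_refl _
  refine Or.inr ⟨k + 1, mem_up1.mpr ⟨k, hkA, rfl⟩, ?_, ?_⟩
  · intro hk
    obtain ⟨a, ha, hak⟩ := mem_up1.mp hk
    have : a = k := by omega
    subst this
    exact hkC ha
  · intro j hj
    rw [mem_up1, mem_up1]
    constructor
    · rintro ⟨a, ha, rfl⟩
      exact ⟨a, (hag a (by omega)).mp ha, rfl⟩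
    · rintro ⟨a, ha, rfl⟩
      exact ⟨a, (hag a (by omega)).mpr ha, rfl⟩

lemma lexLE_image_iff {f : ℕ → ℕ} {m : ℕ}
    (hf : ∀ a < m, ∀ b < m, a < b → f a < f b) {A C : Finset ℕ}
    (hA : A ⊆ Finset.range m) (hC : C ⊆ Finset.range m) :
    lexLE (A.image f) (C.image f) ↔ lexLE A C := by
  have hinj : ∀ a < m, ∀ b < m, f a = f b → a = b := by
    intro a ha b hb hab
    by_contra hne
    rcases Nat.lt_trichotomy a b with h | rfl | h
    · exact absurd hab (Nat.ne_of_lt (hf a ha b hb h))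
    · exact hne rfl
    · exact absurd hab.symm (Nat.ne_of_lt (hf b hb a ha h))
  have hmemA : ∀ a ∈ A, a < m := fun a ha => Finset.mem_range.mp (hA ha)
  have hmemC : ∀ a ∈ C, a < m := fun a ha => Finset.mem_range.mp (hC ha)
  have himg : ∀ (X : Finset ℕ), X ⊆ Finset.range m → ∀ a < m, (f a ∈ X.image f ↔ a ∈ X) := by
    intro X hX a ham
    constructor
    · intro h
      obtain ⟨b, hb, hba⟩ := Finset.mem_image.mp h
      rwa [← hinj b (Finset.mem_range.mp (hX hb)) a ham hba]
    · intro h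
      exact Finset.mem_image_of_mem f h
  constructor
  · rintro (heq | ⟨k, hkA, hkC, hag⟩)
    · left
      ext a
      constructor
      · intro ha
        have ham := hmemA a ha
        have : f a ∈ C.image f := heq ▸ Finset.mem_image_of_mem f ha
        exact (himg C hC a ham).mp this
      · intro ha
        have ham := hmemC a ha
        have : f a ∈ A.image f := heq ▸ Finset.mem_image_of_mem f ha
        exact (himg A hA a ham).mp this
    · right
      obtain ⟨a, haA, rfl⟩ := Finset.mem_image.mp hkA
      have ham := hmemA a haA
      refine ⟨a, haA, ?_, ?_⟩
      · intro haC
        exact hkC (Finset.mem_image_of_mem f haC)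
      · intro j hj
        have hjm : j < m := by omega
        constructor
        · intro hjA
          have : f j ∈ C.image f := (hag (f j) (hf j hjm a ham hj)).mp
            (Finset.mem_image_of_mem f hjA)
          exact (himg C hC j hjm).mp this
        · intro hjC
          have : f j ∈ A.image f := (hag (f j) (hf j hjm a ham hj)).mpr
            (Finset.mem_image_of_mem f hjC)
          exact (himg A hA j hjm).mp this
  · rintro (rfl | ⟨k, hkA, hkC, hag⟩)
    · exact lexLE_refl _
    have hkm := hmemA k hkA
    right
    refine ⟨f k, Finset.mem_image_of_mem f hkA, ?_, ?_⟩
    · intro h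
      exact hkC ((himg C hC k hkm).mp h)
    · intro j hj
      constructor
      · intro hjA
        obtain ⟨a, haA, rfl⟩ := Finset.mem_image.mp hjA
        have ham := hmemA a haA
        have hak : a < k := by
          by_contra hak
          rcases Nat.lt_or_ge k a with h' | h'
          · exact absurd hj (not_lt_of_ge (le_of_lt (hf k hkm a ham h')))
          · have : a = k := by omega
            subst this
            omega
        exact Finset.mem_image_of_mem f ((hag a hak).mp haA)
      · intro hjC
        obtain ⟨a, haC, rfl⟩ := Finset.mem_image.mp hjC
        have ham := hmemC a haC
        have hak : a < k := by
          by_contra hak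
          rcases Nat.lt_or_ge k a with h' | h'
          · exact absurd hj (not_lt_of_ge (le_of_lt (hf k hkm a ham h')))
          · have : a = k := by omega
            subst this
            exact hkC haC
        exact Finset.mem_image_of_mem f ((hag a hak).mpr haC)

end SubwordLex

/-! ### Part 3: the greedy (sorting) algorithm is the lex-least reduced subword -/

section Greedy

variable (cs : CoxeterSystem M W)

/-- `u` has a reduced word appearing as a subword of `ω`. -/
def Srt (ω : List B) (u : W) : Prop :=
  ∃ l, l <+ ω ∧ cs.IsReduced l ∧ cs.wordProd l = u

/-- The greedy algorithm, structural version. -/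
noncomputable def gr : List B → W → Finset ℕ
  | [], _ => ∅
  | c :: ω, u =>
      if cs.length (cs.simple c * u) < cs.length u then
        insert 0 (up1 (gr ω (cs.simple c * u)))
      else up1 (gr ω u)

lemma gr_nil (u : W) : gr cs [] u = ∅ := rfl

lemma gr_cons (c : B) (ω : List B) (u : W) :
    gr cs (c :: ω) u =
      if cs.length (cs.simple c * u) < cs.length u then
        insert 0 (up1 (gr cs ω (cs.simple c * u)))
      else up1 (gr cs ω u) := rfl

lemma srt_tail_desc {c : B} {ω : List B} {u : W} (h : Srt cs (c :: ω) u)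
    (hdesc : cs.length (cs.simple c * u) < cs.length u) :
    Srt cs ω (cs.simple c * u) := by
  obtain ⟨l, hl, hred, hprod⟩ := h
  cases hl with
  | cons _ h =>
      subst hprod
      obtain ⟨l', hl', hred', hprod'⟩ := simple_exchange cs hred hdesc
      exact ⟨l', hl'.trans h, hred', hprod'⟩
  | cons_cons _ h =>
      rename_i l₁
      have hprod₁ : cs.wordProd l₁ = cs.simple c * u := by
        rw [← hprod, cs.wordProd_cons, cs.simple_mul_simple_cancel_left]
      have hdisj := cs.length_simple_mul u c
      have hredlen : cs.length u = l₁.length + 1 := by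
        have h1 : cs.length (cs.wordProd (c :: l₁)) = (c :: l₁).length := hred
        rw [hprod] at h1
        simpa using h1
      have hred₁ : cs.IsReduced l₁ := by
        show cs.length (cs.wordProd l₁) = l₁.length
        have hble := cs.length_wordProd_le l₁
        rw [hprod₁] at hble ⊢
        omega
      exact ⟨l₁, h, hred₁, hprod₁⟩

lemma srt_tail_asc {c : B} {ω : List B} {u : W} (h : Srt cs (c :: ω) u)
    (hasc : ¬ cs.length (cs.simple c * u) < cs.length u) :
    Srt cs ω u := by
  obtain ⟨l, hl, hred, hprod⟩ := h
  cases hl with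
  | cons _ h => exact ⟨l, h, hred, hprod⟩
  | cons_cons _ h =>
      rename_i l₁
      exfalso
      have hprod₁ : cs.wordProd l₁ = cs.simple c * u := by
        rw [← hprod, cs.wordProd_cons, cs.simple_mul_simple_cancel_left]
      have hredlen : cs.length (cs.wordProd (c :: l₁)) = l₁.length + 1 := by
        have : cs.length (cs.wordProd (c :: l₁)) = (c :: l₁).length := hred
        simpa using this
      rw [hprod] at hredlen
      have hble := cs.length_wordProd_le l₁
      rw [hprod₁] at hble
      omega

theorem gr_spec : ∀ (ω : List B) (u : W), Srt cs ω u →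
    gr cs ω u ⊆ Finset.range ω.length ∧
    cs.IsReduced (subword ω (gr cs ω u)) ∧
    cs.wordProd (subword ω (gr cs ω u)) = u ∧
    ∀ C ⊆ Finset.range ω.length, cs.IsReduced (subword ω C) →
      cs.wordProd (subword ω C) = u → lexLE (gr cs ω u) C := by
  intro ω
  induction ω with
  | nil =>
      intro u hu
      obtain ⟨l, hl, _, hprod⟩ := hu
      rw [List.sublist_nil.mp hl] at hprod
      rw [cs.wordProd_nil] at hprod
      subst hprod
      refine ⟨by simp [gr_nil], ?_, ?_, ?_⟩
      · rw [gr_nil, subword_empty]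
        show cs.length (cs.wordProd []) = _
        simp
      · rw [gr_nil, subword_empty, cs.wordProd_nil]
      · intro C hC _ _
        have : C = ∅ := by
          rw [← Finset.subset_empty]
          simpa using hC
        rw [this, gr_nil]
        exact lexLE_refl _
  | cons c ω ih =>
      intro u hu
      have hlen : (c :: ω).length = ω.length + 1 := by simp
      by_cases hdesc : cs.length (cs.simple c * u) < cs.length u
      · have hsrt' := srt_tail_desc cs hu hdesc
        obtain ⟨ihsub, ihred, ihprod, ihmin⟩ := ih (cs.simple c * u) hsrt'
        have hgr : gr cs (c :: ω) u = insert 0 (up1 (gr cs ω (cs.simple c * u))) := by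
          rw [gr_cons, if_pos hdesc]
        have hsubrange : gr cs (c :: ω) u ⊆ Finset.range (c :: ω).length := by
          rw [hgr, hlen]
          intro x hx
          rcases Finset.mem_insert.mp hx with rfl | hx
          · simp
          · exact up1_subset_range ihsub hx
        have hsubw : subword (c :: ω) (gr cs (c :: ω) u)
            = c :: subword ω (gr cs ω (cs.simple c * u)) := by
          rw [hgr, subword_insert_up1]
        have hprodw : cs.wordProd (subword (c :: ω) (gr cs (c :: ω) u)) = u := by
          rw [hsubw, cs.wordProd_cons, ihprod, cs.simple_mul_simple_cancel_left]
        have hdisj := cs.length_simple_mul u c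
        have hredw : cs.IsReduced (subword (c :: ω) (gr cs (c :: ω) u)) := by
          show cs.length _ = _
          rw [hprodw, hsubw]
          have h1 : cs.length (cs.wordProd (subword ω (gr cs ω (cs.simple c * u))))
              = (subword ω (gr cs ω (cs.simple c * u))).length := ihred
          rw [ihprod] at h1
          simp only [List.length_cons]
          omega
        refine ⟨hsubrange, hredw, hprodw, ?_⟩
        intro C hC hCred hCprod
        by_cases h0 : 0 ∈ C
        · have hd := finset_decomp_pos h0
          rw [hd, subword_insert_up1] at hCred hCprod
          have hCprod' : cs.wordProd (subword ω (down1 C)) = cs.simple c * u := by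
            rw [← hCprod, cs.wordProd_cons, cs.simple_mul_simple_cancel_left]
          have hCred' : cs.IsReduced (subword ω (down1 C)) := by
            show cs.length _ = _
            have h1 : cs.length (cs.wordProd (c :: subword ω (down1 C)))
                = (subword ω (down1 C)).length + 1 := by
              have : cs.length (cs.wordProd (c :: subword ω (down1 C)))
                  = (c :: subword ω (down1 C)).length := hCred
              simpa using this
            rw [hCprod] at h1
            have hble := cs.length_wordProd_le (subword ω (down1 C))
            rw [hCprod'] at hble ⊢
            omega
          have hC' : down1 C ⊆ Finset.range ω.length := by
            apply down1_subset_range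
            rw [← hlen]
            exact hC
          have hmin' := ihmin (down1 C) hC' hCred' hCprod'
          rw [hgr, hd]
          exact lexLE_insert_zero (zero_not_mem_up1 _) (zero_not_mem_up1 _) (lexLE_up1 hmin')
        · rw [hgr]
          exact lexLE_of_zero_mem (Finset.mem_insert_self 0 _) h0
      · have hsrt' := srt_tail_asc cs hu hdesc
        obtain ⟨ihsub, ihred, ihprod, ihmin⟩ := ih u hsrt'
        have hdisj := cs.length_simple_mul u c
        have hgr : gr cs (c :: ω) u = up1 (gr cs ω u) := by
          rw [gr_cons, if_neg hdesc]
        have hsubw : subword (c :: ω) (gr cs (c :: ω) u) = subword ω (gr cs ω u) := by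
          rw [hgr, subword_up1]
        refine ⟨?_, ?_, ?_, ?_⟩
        · rw [hgr, hlen]
          exact up1_subset_range ihsub
        · rw [hsubw]; exact ihred
        · rw [hsubw]; exact ihprod
        · intro C hC hCred hCprod
          by_cases h0 : 0 ∈ C
          · exfalso
            have hd := finset_decomp_pos h0
            rw [hd, subword_insert_up1] at hCred hCprod
            have hCprod' : cs.wordProd (subword ω (down1 C)) = cs.simple c * u := by
              rw [← hCprod, cs.wordProd_cons, cs.simple_mul_simple_cancel_left]
            have h1 : cs.length (cs.wordProd (c :: subword ω (down1 C)))
                = (subword ω (down1 C)).length + 1 := by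
              have : cs.length (cs.wordProd (c :: subword ω (down1 C)))
                  = (c :: subword ω (down1 C)).length := hCred
              simpa using this
            rw [hCprod] at h1
            have hble := cs.length_wordProd_le (subword ω (down1 C))
            rw [hCprod'] at hble
            omega
          · have hd := finset_decomp_neg h0
            rw [hd, subword_up1] at hCred hCprod
            have hC' : down1 C ⊆ Finset.range ω.length := by
              apply down1_subset_range
              rw [← hlen]
              exact hC
            have hmin' := ihmin (down1 C) hC' hCred hCprod
            rw [hgr, hd]
            exact lexLE_up1 hmin'

/-- Any sorted index set is the output of the greedy algorithm on its product. -/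
lemma isSorted_eq_gr {ω : List B} {A : Finset ℕ} (h : IsSorted cs ω A) :
    A = gr cs ω (cs.wordProd (subword ω A)) := by
  obtain ⟨hrange, hred, hmin⟩ := h
  set u := cs.wordProd (subword ω A) with hu
  have hsrt : Srt cs ω u := ⟨subword ω A, subword_sublist ω A, hred, rfl⟩
  obtain ⟨gsub, gred, gprod, gmin⟩ := gr_spec cs ω u hsrt
  have h1 : lexLE (gr cs ω u) A := gmin A hrange hred rfl
  have h2 : lexLE A (gr cs ω u) := hmin (gr cs ω u) gsub gred gprod
  exact lexLE_antisymm h2 h1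

/-- The greedy output is sorted. -/
lemma gr_isSorted {ω : List B} {u : W} (h : Srt cs ω u) :
    IsSorted cs ω (gr cs ω u) := by
  obtain ⟨gsub, gred, gprod, gmin⟩ := gr_spec cs ω u h
  exact ⟨gsub, gred, fun C hC hCred hCprod => gmin C hC hCred (hCprod.trans gprod)⟩

end Greedy

/-! ### Part 4: the top (Demazure-greedy) subword -/

section Top

variable (cs : CoxeterSystem M W)

/-- Greedily take letters while the product stays reduced. -/
noncomputable def top : List B → W → Finset ℕ
  | [], _ => ∅
  | c :: ω, x =>
      if cs.length x < cs.length (x * cs.simple c) then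
        insert 0 (up1 (top ω (x * cs.simple c)))
      else up1 (top ω x)

lemma top_nil (x : W) : top cs [] x = ∅ := rfl

lemma top_cons (c : B) (ω : List B) (x : W) :
    top cs (c :: ω) x =
      if cs.length x < cs.length (x * cs.simple c) then
        insert 0 (up1 (top cs ω (x * cs.simple c)))
      else up1 (top cs ω x) := rfl

lemma top_spec : ∀ (ω : List B) (x : W),
    top cs ω x ⊆ Finset.range ω.length ∧
    cs.length (x * cs.wordProd (subword ω (top cs ω x)))
      = cs.length x + (subword ω (top cs ω x)).length := by
  intro ω
  induction ω with
  | nil =>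
      intro x
      refine ⟨by simp [top_nil], ?_⟩
      rw [top_nil, subword_empty, cs.wordProd_nil]
      simp
  | cons c ω ih =>
      intro x
      have hlen : (c :: ω).length = ω.length + 1 := by simp
      by_cases htake : cs.length x < cs.length (x * cs.simple c)
      · have hxs : cs.length (x * cs.simple c) = cs.length x + 1 := by
          have := cs.length_mul_simple x c
          omega
        obtain ⟨ihsub, ihlen⟩ := ih (x * cs.simple c)
        have htop : top cs (c :: ω) x = insert 0 (up1 (top cs ω (x * cs.simple c))) := by
          rw [top_cons, if_pos htake]
        constructor
        · rw [htop, hlen]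
          intro y hy
          rcases Finset.mem_insert.mp hy with rfl | hy
          · simp
          · exact up1_subset_range ihsub hy
        · rw [htop, subword_insert_up1, cs.wordProd_cons]
          rw [← mul_assoc]
          simp only [List.length_cons]
          omega
      · obtain ⟨ihsub, ihlen⟩ := ih x
        have htop : top cs (c :: ω) x = up1 (top cs ω x) := by
          rw [top_cons, if_neg htake]
        constructor
        · rw [htop, hlen]
          exact up1_subset_range ihsub
        · rw [htop, subword_up1]
          exact ihlen

/-- Key containment: greedy sets live inside the top set. -/
lemma gr_subset_top : ∀ (ω : List B) (x : W) (u : W),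
    cs.length (x * u) = cs.length x + cs.length u → Srt cs ω u →
    gr cs ω u ⊆ top cs ω x := by
  intro ω
  induction ω with
  | nil => intro x u _ _; rw [gr_nil]; exact Finset.empty_subset _
  | cons c ω ih =>
      intro x u hxu hsrt
      by_cases htake : cs.length x < cs.length (x * cs.simple c)
      · have hxs : cs.length (x * cs.simple c) = cs.length x + 1 := by
          have := cs.length_mul_simple x c
          omega
        have htop : top cs (c :: ω) x = insert 0 (up1 (top cs ω (x * cs.simple c))) := by
          rw [top_cons, if_pos htake]
        by_cases hdesc : cs.length (cs.simple c * u) < cs.length u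
        · have hsu : cs.length (cs.simple c * u) + 1 = cs.length u := by
            have := cs.length_simple_mul u c
            omega
          have hgr : gr cs (c :: ω) u = insert 0 (up1 (gr cs ω (cs.simple c * u))) := by
            rw [gr_cons, if_pos hdesc]
          rw [hgr, htop]
          apply Finset.insert_subset_insert
          apply Finset.image_subset_image
          apply ih
          · have hx : x * cs.simple c * (cs.simple c * u) = x * u := by
              rw [mul_assoc, cs.simple_mul_simple_cancel_left]
            rw [hx]
            omega
          · exact srt_tail_desc cs hsrt hdesc
        · have hsu : cs.length (cs.simple c * u) = cs.length u + 1 := by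
            have := cs.length_simple_mul u c
            omega
          have hgr : gr cs (c :: ω) u = up1 (gr cs ω u) := by
            rw [gr_cons, if_neg hdesc]
          rw [hgr, htop]
          apply Finset.Subset.trans (Finset.image_subset_image ?_) (Finset.subset_insert _ _)
          apply ih
          · have := length_lemmaD cs hxs hsu hxu
            omega
          · exact srt_tail_asc cs hsrt hdesc
      · have hxs : cs.length (x * cs.simple c) + 1 = cs.length x := by
          have := cs.length_mul_simple x c
          omega
        have hasc : cs.length (cs.simple c * u) = cs.length u + 1 := by
          have h1 : cs.length (x * u) ≤ cs.length (x * cs.simple c) + cs.length (cs.simple c * u) := by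
            have h2 : x * u = (x * cs.simple c) * (cs.simple c * u) := by
              rw [mul_assoc, cs.simple_mul_simple_cancel_left]
            rw [h2]
            exact cs.length_mul_le _ _
          have := cs.length_simple_mul u c
          omega
        have hdesc : ¬ cs.length (cs.simple c * u) < cs.length u := by omega
        have hgr : gr cs (c :: ω) u = up1 (gr cs ω u) := by
          rw [gr_cons, if_neg hdesc]
        have htop : top cs (c :: ω) x = up1 (top cs ω x) := by
          rw [top_cons, if_neg htake]
        rw [hgr, htop]
        apply Finset.image_subset_image
        exact ih x u hxu (srt_tail_asc cs hsrt hdesc)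

/-- The top subword is sorted, and contains every sorted subword. -/
lemma top_sorted (ω : List B) :
    IsSorted cs ω (top cs ω 1) ∧ ∀ A, IsSorted cs ω A → A ⊆ top cs ω 1 := by
  obtain ⟨hTsub, hTlen⟩ := top_spec cs ω 1
  rw [one_mul, cs.length_one, Nat.zero_add] at hTlen
  have hredτ : cs.IsReduced (subword ω (top cs ω 1)) := hTlen
  set uT := cs.wordProd (subword ω (top cs ω 1)) with huT
  have hsrtT : Srt cs ω uT := ⟨_, subword_sublist ω _, hredτ, rfl⟩
  obtain ⟨gsub, gred, gprod, gmin⟩ := gr_spec cs ω uT hsrtT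
  have hGtop : gr cs ω uT ⊆ top cs ω 1 := by
    apply gr_subset_top cs ω 1 uT
    · rw [one_mul, cs.length_one, Nat.zero_add]
    · exact hsrtT
  have hcardG : (gr cs ω uT).card = cs.length uT := by
    have h1 : (subword ω (gr cs ω uT)).length = (gr cs ω uT).card := length_subword ω _ gsub
    have h2 : cs.length (cs.wordProd (subword ω (gr cs ω uT)))
        = (subword ω (gr cs ω uT)).length := gred
    rw [gprod] at h2
    omega
  have hcardT : (top cs ω 1).card = cs.length uT := by
    have h1 : (subword ω (top cs ω 1)).length = (top cs ω 1).card := length_subword ω _ hTsub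
    have h2 : cs.length uT = (subword ω (top cs ω 1)).length := hredτ
    omega
  have hGT : gr cs ω uT = top cs ω 1 :=
    Finset.eq_of_subset_of_card_le hGtop (by omega)
  constructor
  · rw [← hGT]
    exact gr_isSorted cs hsrtT
  · intro A hA
    have hAgr := isSorted_eq_gr cs hA
    rw [hAgr]
    apply gr_subset_top cs ω 1 _
    · rw [one_mul, cs.length_one, Nat.zero_add]
    · exact ⟨subword ω A, subword_sublist ω A, hA.2.1, rfl⟩

end Top

/-! ### Part 5: change of base word -/

section Compose

open scoped Classical

lemma filterMap_get?_get? (ω : List B) : ∀ (xs : List ℕ), (∀ j ∈ xs, j < ω.length) →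
    ∀ i, i < xs.length →
    (xs.filterMap (fun j => ω[j]?))[i]? = ω[xs.getD i 0]? := by
  intro xs
  induction xs with
  | nil => intro _ i hi; simp at hi
  | cons j xs ih =>
      intro hmem i hi
      have hj : j < ω.length := hmem j (by simp)
      obtain ⟨b, hb⟩ : ∃ b, ω[j]? = some b := by
        rw [List.getElem?_eq_getElem hj]
        exact ⟨_, rfl⟩
      rw [List.filterMap_cons, hb]
      cases i with
      | zero =>
          simp only [List.getElem?_cons_zero, List.getD_cons_zero]
          exact hb.symm
      | succ i =>
          simp only [List.getElem?_cons_succ, List.getD_cons_succ]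
          exact ih (fun a ha => hmem a (by simp [ha])) i (by simpa using hi)

lemma sort_getD_mono (V : Finset ℕ) {a b : ℕ} (ha : a < V.card) (hb : b < V.card)
    (hab : a < b) :
    (V.sort (· ≤ ·)).getD a 0 < (V.sort (· ≤ ·)).getD b 0 := by
  have hlen : (V.sort (· ≤ ·)).length = V.card := Finset.length_sort _
  rw [List.getD_eq_getElem _ _ (by omega), List.getD_eq_getElem _ _ (by omega)]
  have hp := (Finset.sortedLT_sort V).pairwise
  exact List.pairwise_iff_getElem.mp hp a b (by omega) (by omega) hab

lemma sort_getD_mem (V : Finset ℕ) {a : ℕ} (ha : a < V.card) :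
    (V.sort (· ≤ ·)).getD a 0 ∈ V := by
  have hlen : (V.sort (· ≤ ·)).length = V.card := Finset.length_sort _
  rw [List.getD_eq_getElem _ _ (by omega)]
  exact (Finset.mem_sort _).mp (List.getElem_mem _)

lemma subword_get? (ω : List B) (V : Finset ℕ) (hV : V ⊆ Finset.range ω.length)
    {i : ℕ} (hi : i < V.card) :
    (subword ω V)[i]? = ω[(V.sort (· ≤ ·)).getD i 0]? := by
  rw [subword]
  apply filterMap_get?_get?
  · intro j hj
    exact Finset.mem_range.mp (hV ((Finset.mem_sort _).mp hj))
  · rw [Finset.length_sort]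
    exact hi

lemma subword_subword (ω : List B) (V : Finset ℕ) (hV : V ⊆ Finset.range ω.length)
    (A : Finset ℕ) (hA : A ⊆ Finset.range V.card) :
    subword (subword ω V) A
      = subword ω (A.image (fun i => (V.sort (· ≤ ·)).getD i 0)) := by
  have hmemA : ∀ a ∈ A, a < V.card := fun a ha => Finset.mem_range.mp (hA ha)
  have hsorteq : ((A.image (fun i => (V.sort (· ≤ ·)).getD i 0)).sort (· ≤ ·))
      = (A.sort (· ≤ ·)).map (fun i => (V.sort (· ≤ ·)).getD i 0) :=
    sort_image A _ (fun a ha b hb h =>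
      sort_getD_mono V (hmemA a ha) (hmemA b hb) h)
  rw [subword, subword, subword, hsorteq, List.filterMap_map]
  apply List.filterMap_congr
  intro j hj
  have hjA : j ∈ A := (Finset.mem_sort _).mp hj
  exact subword_get? ω V hV (hmemA j hjA)

/-- Transport of sortedness along the order isomorphism with the top word. -/
lemma part3_iff (cs : CoxeterSystem M W) (ω : List B) (T : Finset ℕ)
    (hTsorted : IsSorted cs ω T) (hTmax : ∀ A, IsSorted cs ω A → A ⊆ T)
    (A : Finset ℕ) (hA : A ⊆ Finset.range T.card) :
    IsSorted cs (subword ω T) A ↔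
      IsSorted cs ω (A.image fun i => (T.sort (· ≤ ·)).getD i 0) := by
  set f : ℕ → ℕ := fun i => (T.sort (· ≤ ·)).getD i 0 with hfdef
  have hTrange : T ⊆ Finset.range ω.length := hTsorted.1
  have hωlen : (subword ω T).length = T.card := length_subword ω T hTrange
  have hfmono : ∀ a < T.card, ∀ b < T.card, a < b → f a < f b :=
    fun a ha b hb hab => sort_getD_mono T ha hb hab
  have hfmem : ∀ a < T.card, f a ∈ T := fun a ha => sort_getD_mem T ha
  have himgrange : ∀ X : Finset ℕ, X ⊆ Finset.range T.card →
      X.image f ⊆ Finset.range ω.length := by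
    intro X hX y hy
    obtain ⟨a, haX, rfl⟩ := Finset.mem_image.mp hy
    exact hTrange (hfmem a (Finset.mem_range.mp (hX haX)))
  have hsubcomp : ∀ X : Finset ℕ, X ⊆ Finset.range T.card →
      subword (subword ω T) X = subword ω (X.image f) :=
    fun X hX => subword_subword ω T hTrange X hX
  have hfinj : ∀ a < T.card, ∀ b < T.card, f a = f b → a = b := by
    intro a ha b hb hab
    by_contra hne
    rcases Nat.lt_trichotomy a b with h | rfl | h
    · exact absurd hab (Nat.ne_of_lt (hfmono a ha b hb h))
    · exact hne rfl
    · exact absurd hab.symm (Nat.ne_of_lt (hfmono b hb a ha h))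
  have himT : (Finset.range T.card).image f = T := by
    apply Finset.eq_of_subset_of_card_le
    · intro y hy
      obtain ⟨a, haX, rfl⟩ := Finset.mem_image.mp hy
      exact hfmem a (Finset.mem_range.mp haX)
    · have : ((Finset.range T.card).image f).card = T.card := by
        rw [Finset.card_image_of_injOn, Finset.card_range]
        intro a ha b hb hab
        exact hfinj a (by simpa using ha) b (by simpa using hb) hab
      omega
  have hpull : ∀ G : Finset ℕ, G ⊆ T → ∃ X, X ⊆ Finset.range T.card ∧ X.image f = G := by
    intro G hG
    refine ⟨(Finset.range T.card).filter (fun i => f i ∈ G), Finset.filter_subset _ _, ?_⟩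
    apply Finset.Subset.antisymm
    · intro y hy
      obtain ⟨a, ha, rfl⟩ := Finset.mem_image.mp hy
      exact (Finset.mem_filter.mp ha).2
    · intro g hg
      have hgim : g ∈ (Finset.range T.card).image f := by
        rw [himT]
        exact hG hg
      obtain ⟨a, ha, rfl⟩ := Finset.mem_image.mp hgim
      exact Finset.mem_image_of_mem f (Finset.mem_filter.mpr ⟨ha, hg⟩)
  constructor
  · intro hAsorted
    obtain ⟨hA1, hA2, hA3⟩ := hAsorted
    refine ⟨himgrange A hA, ?_, ?_⟩
    · rw [← hsubcomp A hA]
      exact hA2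
    · intro C hC hCred hCprod
      have hsrt : Srt cs ω (cs.wordProd (subword ω (A.image f))) :=
        ⟨subword ω C, subword_sublist ω C, hCred, hCprod⟩
      obtain ⟨gsub, gred, gprod, gmin⟩ := gr_spec cs ω _ hsrt
      have hGsorted : IsSorted cs ω (gr cs ω (cs.wordProd (subword ω (A.image f)))) :=
        gr_isSorted cs hsrt
      have hGT := hTmax _ hGsorted
      obtain ⟨X, hX, hXim⟩ := hpull _ hGT
      have hsubX : subword (subword ω T) X
          = subword ω (gr cs ω (cs.wordProd (subword ω (A.image f)))) := by
        rw [hsubcomp X hX, hXim]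
      have hlex1 : lexLE A X := by
        apply hA3 X
        · rw [hωlen]
          exact hX
        · rw [hsubX]
          exact gred
        · rw [hsubX, gprod, hsubcomp A hA]
      have hlex2 : lexLE (A.image f) (X.image f) :=
        (lexLE_image_iff hfmono hA hX).mpr hlex1
      rw [hXim] at hlex2
      exact lexLE_trans hlex2 (gmin C hC hCred hCprod)
  · intro hIsorted
    obtain ⟨hI1, hI2, hI3⟩ := hIsorted
    refine ⟨?_, ?_, ?_⟩
    · rw [hωlen]
      exact hA
    · rw [hsubcomp A hA]
      exact hI2
    · intro C hC hCred hCprod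
      rw [hωlen] at hC
      have hCim := himgrange C hC
      have hsubC : subword (subword ω T) C = subword ω (C.image f) := hsubcomp C hC
      have hlex : lexLE (A.image f) (C.image f) := by
        apply hI3 (C.image f) hCim
        · rw [← hsubC]
          exact hCred
        · rw [← hsubC, ← hsubcomp A hA]
          exact hCprod
      exact (lexLE_image_iff hfmono hA hC).mp hlex

end Compose

/-- the union `U` of all ω-sorted subwords of `ω` is itself ω-sorted
(in particular reduced), every ω-sorted set is contained in `U`, and sorting with
respect to the reduced word `ω' = subword ω U` agrees with sorting with respect to
`ω` (under the order-preserving identification of positions of `ω'` with `U`). -/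
theorem union_of_sorted_is_sorted (cs : CoxeterSystem M W) (ω : List B) (U : Finset ℕ)
    (hU : ∀ i, i ∈ U ↔ ∃ A : Finset ℕ, IsSorted cs ω A ∧ i ∈ A) :
    IsSorted cs ω U ∧
    (∀ A : Finset ℕ, IsSorted cs ω A → A ⊆ U) ∧
    (∀ A : Finset ℕ, A ⊆ Finset.range U.card →
      (IsSorted cs (subword ω U) A ↔
        IsSorted cs ω (A.image fun i => (U.sort (· ≤ ·)).getD i 0))) := by
  obtain ⟨hTsorted, hTmax⟩ := top_sorted cs ω
  have hUT : U = top cs ω 1 := by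
    ext i
    rw [hU i]
    constructor
    · rintro ⟨A, hA, hiA⟩
      exact hTmax A hA hiA
    · intro hi
      exact ⟨top cs ω 1, hTsorted, hi⟩
  subst hUT
  exact ⟨hTsorted, hTmax, fun A hA => part3_iff cs ω _ hTsorted hTmax A hA⟩

end SortingPaper
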